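/- Let H be a complex Hilbert space and L, M closed linear subspaces with Q = L ∩ M, satisfying (1) c(L,M) < 1 and (2) the orthogonal complement of L + M in H is {0}. Then L + M = H, i.e., every vector x ∈ H can be written as x = x_L + x_M with x_L ∈ L and x_M ∈ M. -/

import Mathlib

open scoped InnerProductSpace Pointwise

/-- The inclination `c(L,M)` of two subspaces `L`, `M` of a complex Hilbert space:
the supremum of `|⟪u,v⟫| / (‖u‖‖v‖)` over nonzero `u ∈ L ⊖ Q` and nonzero `v ∈ M ⊖ Q`,
where `Q = L ⊓ M` and `L ⊖ Q = L ⊓ Qᗮ`, `M ⊖ Q = M ⊓ Qᗮ`. -/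
noncomputable def inclination {H : Type*} [NormedAddCommGroup H] [InnerProductSpace ℂ H]
    (L M : Submodule ℂ H) : ℝ :=
  sSup {r : ℝ | ∃ u ∈ L ⊓ (L ⊓ M)ᗮ, ∃ v ∈ M ⊓ (L ⊓ M)ᗮ,
    u ≠ 0 ∧ v ≠ 0 ∧ r = ‖⟪u, v⟫_ℂ‖ / (‖u‖ * ‖v‖)}

theorem stmt_3 {H : Type*} [NormedAddCommGroup H] [InnerProductSpace ℂ H] [CompleteSpace H]
    (L M : Submodule ℂ H) (hL : IsClosed (L : Set H)) (hM : IsClosed (M : Set H))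
    (hLQ : ∃ u ∈ L ⊓ (L ⊓ M)ᗮ, u ≠ 0) (hMQ : ∃ v ∈ M ⊓ (L ⊓ M)ᗮ, v ≠ 0)
    (hc : inclination L M < 1) (horth : (L ⊔ M)ᗮ = ⊥) :
    ∀ x : H, ∃ xL ∈ L, ∃ xM ∈ M, x = xL + xM := by
  classical
  set Q : Submodule ℂ H := L ⊓ M with hQdef
  set c : ℝ := inclination L M with hcdef
  set S : Set ℝ := {r : ℝ | ∃ u ∈ L ⊓ Qᗮ, ∃ v ∈ M ⊓ Qᗮ,
    u ≠ 0 ∧ v ≠ 0 ∧ r = ‖⟪u, v⟫_ℂ‖ / (‖u‖ * ‖v‖)} with hSdef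
  have hcS : c = sSup S := rfl
  have hbdd : BddAbove S := by
    refine ⟨1, ?_⟩
    rintro r ⟨u, hu, v, hv, hu0, hv0, rfl⟩
    rw [div_le_one (mul_pos (norm_pos_iff.mpr hu0) (norm_pos_iff.mpr hv0))]
    exact norm_inner_le_norm u v
  have hc0 : (0 : ℝ) ≤ c := by
    obtain ⟨u, hu, hu0⟩ := hLQ
    obtain ⟨v, hv, hv0⟩ := hMQ
    have hmem : ‖⟪u, v⟫_ℂ‖ / (‖u‖ * ‖v‖) ∈ S := ⟨u, hu, v, hv, hu0, hv0, rfl⟩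
    exact le_trans (by positivity) (hcS ▸ le_csSup hbdd hmem)
  -- Lemma A: inner product bound
  have hA : ∀ u ∈ L ⊓ Qᗮ, ∀ v ∈ M ⊓ Qᗮ, ‖⟪u, v⟫_ℂ‖ ≤ c * (‖u‖ * ‖v‖) := by
    intro u hu v hv
    rcases eq_or_ne u 0 with rfl | hu0
    · simp only [inner_zero_left, norm_zero]
      positivity
    rcases eq_or_ne v 0 with rfl | hv0
    · simp only [inner_zero_right, norm_zero]
      positivity
    have h := hcS ▸ le_csSup hbdd (⟨u, hu, v, hv, hu0, hv0, rfl⟩ : ‖⟪u, v⟫_ℂ‖ / (‖u‖ * ‖v‖) ∈ S)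
    rw [div_le_iff₀ (mul_pos (norm_pos_iff.mpr hu0) (norm_pos_iff.mpr hv0))] at h
    linarith
  -- Lemma B: norm lower bound
  have hB : ∀ u ∈ L ⊓ Qᗮ, ∀ v ∈ M ⊓ Qᗮ,
      (1 - c) * (‖u‖ ^ 2 + ‖v‖ ^ 2) ≤ ‖u + v‖ ^ 2 := by
    intro u hu v hv
    have h1 := hA u hu v hv
    have h2 : |(⟪u, v⟫_ℂ).re| ≤ ‖⟪u, v⟫_ℂ‖ := Complex.abs_re_le_norm _
    have h3 : ‖u + v‖ ^ 2 = ‖u‖ ^ 2 + 2 * RCLike.re ⟪u, v⟫_ℂ + ‖v‖ ^ 2 := norm_add_sq u v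
    have h4 : RCLike.re ⟪u, v⟫_ℂ = (⟪u, v⟫_ℂ).re := rfl
    rw [h3, h4]
    have h5 := abs_le.mp (h2.trans h1)
    nlinarith [mul_nonneg hc0 (sq_nonneg (‖u‖ - ‖v‖))]
  -- orthogonality of Q with L⊓Qᗮ etc.
  have hQclosed : IsClosed (Q : Set H) := by
    have : (Q : Set H) = (L : Set H) ∩ (M : Set H) := rfl
    rw [this]; exact hL.inter hM
  haveI : CompleteSpace Q := hQclosed.completeSpace_coe
  -- Lemma D : combined lower bound
  have hD : ∀ q ∈ Q, ∀ u ∈ L ⊓ Qᗮ, ∀ v ∈ M ⊓ Qᗮ,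
      (1 - c) * (‖q‖ ^ 2 + ‖u‖ ^ 2 + ‖v‖ ^ 2) ≤ ‖q + u + v‖ ^ 2 := by
    intro q hq u hu v hv
    have horth1 : ⟪q, u + v⟫_ℂ = 0 := by
      rw [inner_add_right, hu.2 q hq, hv.2 q hq, add_zero]
    have h3 : ‖q + (u + v)‖ ^ 2 = ‖q‖ ^ 2 + 2 * RCLike.re ⟪q, u + v⟫_ℂ + ‖u + v‖ ^ 2 :=
      norm_add_sq q (u + v)
    rw [horth1] at h3
    simp only [map_zero, mul_zero, add_zero] at h3
    have hB' := hB u hu v hv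
    have : q + u + v = q + (u + v) := by abel
    rw [this, h3]
    nlinarith [sq_nonneg ‖q‖, hc.le]
  -- the square root constant
  set d : ℝ := Real.sqrt (1 - c) with hddef
  have hc1 : (0 : ℝ) < 1 - c := by linarith
  have hd0 : 0 < d := Real.sqrt_pos.mpr hc1
  have hdsq : d ^ 2 = 1 - c := Real.sq_sqrt hc1.le
  -- component bound
  have hcomp : ∀ q ∈ Q, ∀ u ∈ L ⊓ Qᗮ, ∀ v ∈ M ⊓ Qᗮ, ∀ w : H,
      ‖w‖ ^ 2 ≤ ‖q‖ ^ 2 + ‖u‖ ^ 2 + ‖v‖ ^ 2 → d * ‖w‖ ≤ ‖q + u + v‖ := by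
    intro q hq u hu v hv w hw
    have h1 := hD q hq u hu v hv
    have h2 : (d * ‖w‖) ^ 2 ≤ ‖q + u + v‖ ^ 2 := by
      have : (d * ‖w‖) ^ 2 = (1 - c) * ‖w‖ ^ 2 := by rw [mul_pow, hdsq]
      rw [this]
      nlinarith [sq_nonneg ‖q‖, sq_nonneg ‖u‖, sq_nonneg ‖v‖]
    exact le_of_pow_le_pow_left₀ two_ne_zero (norm_nonneg _) h2
  -- decomposition lemma
  have hE : ∀ x ∈ L ⊔ M, ∃ q ∈ Q, ∃ u ∈ L ⊓ Qᗮ, ∃ v ∈ M ⊓ Qᗮ, x = q + u + v := by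
    intro x hx
    obtain ⟨a, ha, b, hb, rfl⟩ := Submodule.mem_sup.mp hx
    have hLdec : Q ⊔ Qᗮ ⊓ L = L :=
      Submodule.sup_orthogonal_inf_of_hasOrthogonalProjection (inf_le_left : Q ≤ L)
    have hMdec : Q ⊔ Qᗮ ⊓ M = M :=
      Submodule.sup_orthogonal_inf_of_hasOrthogonalProjection (inf_le_right : Q ≤ M)
    obtain ⟨q1, hq1, u, hu, rfl⟩ := Submodule.mem_sup.mp (hLdec ▸ ha)
    obtain ⟨q2, hq2, v, hv, rfl⟩ := Submodule.mem_sup.mp (hMdec ▸ hb)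
    exact ⟨q1 + q2, Q.add_mem hq1 hq2, u, ⟨hu.2, hu.1⟩, v, ⟨hv.2, hv.1⟩, by abel⟩
  -- closedness of L ⊔ M
  have hLQclosed : IsClosed ((L ⊓ Qᗮ : Submodule ℂ H) : Set H) := by
    have : ((L ⊓ Qᗮ : Submodule ℂ H) : Set H) = (L : Set H) ∩ (Qᗮ : Set H) := rfl
    rw [this]; exact hL.inter Q.isClosed_orthogonal
  have hMQclosed : IsClosed ((M ⊓ Qᗮ : Submodule ℂ H) : Set H) := by
    have : ((M ⊓ Qᗮ : Submodule ℂ H) : Set H) = (M : Set H) ∩ (Qᗮ : Set H) := rfl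
    rw [this]; exact hM.inter Q.isClosed_orthogonal
  have hclosed : IsClosed ((L ⊔ M : Submodule ℂ H) : Set H) := by
    refine IsSeqClosed.isClosed ?_
    intro f x hf hx
    choose q hq u hu v hv hsum using fun n => hE (f n) (hf n)
    have hfc : CauchySeq f := hx.cauchySeq
    -- key: each component sequence is Cauchy
    have key : ∀ w : ℕ → H, (∀ n m : ℕ, d * ‖w n - w m‖ ≤ ‖f n - f m‖) → CauchySeq w := by
      intro w hw
      rw [Metric.cauchySeq_iff]
      intro ε hε
      obtain ⟨N, hN⟩ := Metric.cauchySeq_iff.mp hfc (d * ε) (by positivity)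
      refine ⟨N, fun m hm n hn => ?_⟩
      have h1 := hw m n
      have h2 := hN m hm n hn
      rw [dist_eq_norm] at h2 ⊢
      have : d * ‖w m - w n‖ < d * ε := lt_of_le_of_lt h1 h2
      exact lt_of_mul_lt_mul_left this hd0.le
    have hdiff : ∀ n m : ℕ, f n - f m =
        (q n - q m) + (u n - u m) + (v n - v m) := by
      intro n m
      rw [hsum n, hsum m]; abel
    have hbound : ∀ n m : ℕ, ∀ w : H,
        ‖w‖ ^ 2 ≤ ‖q n - q m‖ ^ 2 + ‖u n - u m‖ ^ 2 + ‖v n - v m‖ ^ 2 →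
        d * ‖w‖ ≤ ‖f n - f m‖ := by
      intro n m w hw
      rw [hdiff n m]
      exact hcomp _ (Q.sub_mem (hq n) (hq m)) _ ((L ⊓ Qᗮ).sub_mem (hu n) (hu m))
        _ ((M ⊓ Qᗮ).sub_mem (hv n) (hv m)) w hw
    have hqc : CauchySeq q := key q fun n m => hbound n m _
      (by nlinarith [sq_nonneg ‖u n - u m‖, sq_nonneg ‖v n - v m‖])
    have huc : CauchySeq u := key u fun n m => hbound n m _
      (by nlinarith [sq_nonneg ‖q n - q m‖, sq_nonneg ‖v n - v m‖])
    have hvc : CauchySeq v := key v fun n m => hbound n m _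
      (by nlinarith [sq_nonneg ‖q n - q m‖, sq_nonneg ‖u n - u m‖])
    obtain ⟨qq, hqq⟩ := cauchySeq_tendsto_of_complete hqc
    obtain ⟨uu, huu⟩ := cauchySeq_tendsto_of_complete huc
    obtain ⟨vv, hvv⟩ := cauchySeq_tendsto_of_complete hvc
    have hqqm : qq ∈ Q := hQclosed.mem_of_tendsto hqq (Filter.Eventually.of_forall hq)
    have huum : uu ∈ L ⊓ Qᗮ := hLQclosed.mem_of_tendsto huu (Filter.Eventually.of_forall hu)
    have hvvm : vv ∈ M ⊓ Qᗮ := hMQclosed.mem_of_tendsto hvv (Filter.Eventually.of_forall hv)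
    have hxeq : x = qq + uu + vv := by
      have h1 : Filter.Tendsto (fun n => q n + u n + v n) Filter.atTop (nhds (qq + uu + vv)) :=
        (hqq.add huu).add hvv
      have h2 : (fun n => q n + u n + v n) = f := by
        funext n; exact (hsum n).symm
      rw [h2] at h1
      exact tendsto_nhds_unique hx h1
    rw [hxeq]
    exact Submodule.add_mem _
      (Submodule.add_mem _ (Submodule.mem_sup_left hqqm.1) (Submodule.mem_sup_left huum.1))
      (Submodule.mem_sup_right hvvm.1)
  -- conclude L ⊔ M = ⊤
  have htop : L ⊔ M = (⊤ : Submodule ℂ H) := by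
    have h1 : (L ⊔ M)ᗮᗮ = (L ⊔ M).topologicalClosure :=
      Submodule.orthogonal_orthogonal_eq_closure (L ⊔ M)
    rw [horth, Submodule.bot_orthogonal_eq_top, hclosed.submodule_topologicalClosure_eq] at h1
    exact h1.symm
  intro x
  have hx : x ∈ L ⊔ M := htop ▸ Submodule.mem_top
  obtain ⟨xL, hxL, xM, hxM, hsum⟩ := Submodule.mem_sup.mp hx
  exact ⟨xL, hxL, xM, hxM, hsum.symm⟩
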